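/- If the conditional distribution O on a finite set Ξ is uniformly diagonally dominant, i.e., min_{ξ∈Ξ} O(ξ|ξ) > |Ξ| · max_{ξ≠ξ'} O(ξ'|ξ), then there exists a constant c₀ ∈ (0,∞) such that for all probability distributions Q, P on Ξ, d_TV(Q, P) ≤ c₀ · d_TV(O⋆Q, O⋆P), where (O⋆Q)(ξ') = Σ_ξ O(ξ'|ξ)Q(ξ). -/

import Mathlib

open Finset

/-- TV contraction lemma under uniform diagonal dominance. -/
theorem stmt0 {Ξ : Type*} [Fintype Ξ] [DecidableEq Ξ] [Nonempty Ξ]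
    (O : Ξ → Ξ → ℝ)  -- `O ξ' ξ` denotes O(ξ'|ξ)
    (hO_nonneg : ∀ ξ' ξ, 0 ≤ O ξ' ξ)
    (hO_sum : ∀ ξ, ∑ ξ', O ξ' ξ = 1)
    -- uniform diagonal dominance: min_ξ O(ξ|ξ) > |Ξ| · max_{ξ₁ ≠ ξ₂} O(ξ₂|ξ₁)
    (hdd : ∀ ξ ξ₁ ξ₂, ξ₁ ≠ ξ₂ → (Fintype.card Ξ : ℝ) * O ξ₂ ξ₁ < O ξ ξ) :
    ∃ c₀ : ℝ, 0 < c₀ ∧ ∀ Q P : Ξ → ℝ,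
      (∀ ξ, 0 ≤ Q ξ) → (∑ ξ, Q ξ = 1) → (∀ ξ, 0 ≤ P ξ) → (∑ ξ, P ξ = 1) →
      (1/2) * ∑ ξ, |Q ξ - P ξ| ≤
        c₀ * ((1/2) * ∑ ξ', |(∑ ξ, O ξ' ξ * Q ξ) - (∑ ξ, O ξ' ξ * P ξ)|) := by
  classical
  by_cases hcard : Fintype.card Ξ ≤ 1
  · -- trivial case: one element
    refine ⟨1, one_pos, ?_⟩
    intro Q P hQ hQs hP hPs
    have h1 : Fintype.card Ξ = 1 := le_antisymm hcard Fintype.card_pos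
    obtain ⟨a, ha⟩ := Finset.card_eq_one.mp (Finset.card_univ.trans h1)
    have hQa : Q a = 1 := by rw [← hQs, ha, Finset.sum_singleton]
    have hPa : P a = 1 := by rw [← hPs, ha, Finset.sum_singleton]
    have hL : ∑ ξ, |Q ξ - P ξ| = 0 := by
      rw [ha, Finset.sum_singleton, hQa, hPa]; simp
    rw [hL]
    have : 0 ≤ ∑ ξ', |(∑ ξ, O ξ' ξ * Q ξ) - (∑ ξ, O ξ' ξ * P ξ)| :=
      Finset.sum_nonneg fun _ _ => abs_nonneg _
    nlinarith
  · push_neg at hcard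
    set n : ℝ := (Fintype.card Ξ : ℝ) with hn
    obtain ⟨a, b, hab⟩ := Fintype.exists_pair_of_one_lt_card hcard
    set s : Finset (Ξ × Ξ) := Finset.univ.filter (fun p => p.1 ≠ p.2) with hs
    have hsne : s.Nonempty := ⟨(a, b), by simp [hs, hab]⟩
    set M : ℝ := s.sup' hsne (fun p => O p.2 p.1) with hM
    set m : ℝ := Finset.univ.inf' Finset.univ_nonempty (fun ξ : Ξ => O ξ ξ) with hm
    have hMnonneg : 0 ≤ M := by
      obtain ⟨p, hp, hpe⟩ := Finset.exists_mem_eq_sup' hsne (fun p => O p.2 p.1)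
      rw [hM, hpe]; exact hO_nonneg _ _
    have hMle : ∀ ξ₁ ξ₂ : Ξ, ξ₁ ≠ ξ₂ → O ξ₂ ξ₁ ≤ M := by
      intro ξ₁ ξ₂ h
      exact Finset.le_sup' (f := fun p : Ξ × Ξ => O p.2 p.1) (b := (ξ₁, ξ₂))
        (by simp [hs, h])
    have hmle : ∀ ξ : Ξ, m ≤ O ξ ξ := fun ξ =>
      Finset.inf'_le _ (Finset.mem_univ ξ)
    have hgap : 0 < m - n * M := by
      obtain ⟨p, hp, hpe⟩ := Finset.exists_mem_eq_sup' hsne (fun p => O p.2 p.1)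
      obtain ⟨ξ₀, _, hξe⟩ := Finset.exists_mem_eq_inf' (Finset.univ_nonempty (α := Ξ))
        (fun ξ : Ξ => O ξ ξ)
      have hp' : p.1 ≠ p.2 := by simpa [hs] using hp
      have := hdd ξ₀ p.1 p.2 hp'
      rw [hM, hpe, hm, hξe]; linarith
    refine ⟨(m - n * M)⁻¹, inv_pos.mpr hgap, ?_⟩
    intro Q P hQ hQs hP hPs
    set D : Ξ → ℝ := fun ξ => Q ξ - P ξ with hD
    set A : ℝ := ∑ ξ, |D ξ| with hA
    have hAnonneg : 0 ≤ A := Finset.sum_nonneg fun _ _ => abs_nonneg _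
    have hrow : ∀ ξ' : Ξ, (∑ ξ, O ξ' ξ * Q ξ) - (∑ ξ, O ξ' ξ * P ξ)
        = ∑ ξ, O ξ' ξ * D ξ := by
      intro ξ'
      rw [← Finset.sum_sub_distrib]
      exact Finset.sum_congr rfl fun ξ _ => by rw [hD]; ring
    -- pointwise lower bound
    have hpw : ∀ ξ' : Ξ, m * |D ξ'| - M * A ≤ |∑ ξ, O ξ' ξ * D ξ| := by
      intro ξ'
      have hsplit : ∑ ξ, O ξ' ξ * D ξ
          = O ξ' ξ' * D ξ' + ∑ ξ ∈ Finset.univ.erase ξ', O ξ' ξ * D ξ :=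
        (Finset.add_sum_erase _ _ (Finset.mem_univ ξ')).symm
      have htri : |O ξ' ξ' * D ξ'| - |∑ ξ ∈ Finset.univ.erase ξ', O ξ' ξ * D ξ|
          ≤ |∑ ξ, O ξ' ξ * D ξ| := by
        rw [hsplit]
        have h := abs_sub_abs_le_abs_sub (O ξ' ξ' * D ξ')
          (-(∑ ξ ∈ Finset.univ.erase ξ', O ξ' ξ * D ξ))
        rw [abs_neg, sub_neg_eq_add] at h
        exact h
      have h1 : m * |D ξ'| ≤ |O ξ' ξ' * D ξ'| := by
        rw [abs_mul, abs_of_nonneg (hO_nonneg ξ' ξ')]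
        exact mul_le_mul_of_nonneg_right (hmle ξ') (abs_nonneg _)
      have h2 : |∑ ξ ∈ Finset.univ.erase ξ', O ξ' ξ * D ξ| ≤ M * A := by
        calc |∑ ξ ∈ Finset.univ.erase ξ', O ξ' ξ * D ξ|
            ≤ ∑ ξ ∈ Finset.univ.erase ξ', |O ξ' ξ * D ξ| :=
              Finset.abs_sum_le_sum_abs _ _
          _ ≤ ∑ ξ ∈ Finset.univ.erase ξ', M * |D ξ| := by
              refine Finset.sum_le_sum fun ξ hξ => ?_
              rw [abs_mul, abs_of_nonneg (hO_nonneg ξ' ξ)]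
              exact mul_le_mul_of_nonneg_right
                (hMle ξ ξ' (Finset.ne_of_mem_erase hξ)) (abs_nonneg _)
          _ ≤ ∑ ξ, M * |D ξ| := by
              refine Finset.sum_le_sum_of_subset_of_nonneg
                (Finset.erase_subset _ _) fun ξ _ _ =>
                mul_nonneg hMnonneg (abs_nonneg _)
          _ = M * A := by rw [hA, Finset.mul_sum]
      linarith
    have hkey : (m - n * M) * A ≤ ∑ ξ', |∑ ξ, O ξ' ξ * D ξ| := by
      have := Finset.sum_le_sum fun ξ' (_ : ξ' ∈ Finset.univ) => hpw ξ'
      have hlhs : ∑ ξ' : Ξ, (m * |D ξ'| - M * A) = (m - n * M) * A := by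
        rw [Finset.sum_sub_distrib, ← Finset.mul_sum, ← hA,
          Finset.sum_const, Finset.card_univ, nsmul_eq_mul]
        ring
      linarith [this, hlhs.symm.le, hlhs.le]
    have hB : ∑ ξ', |(∑ ξ, O ξ' ξ * Q ξ) - (∑ ξ, O ξ' ξ * P ξ)|
        = ∑ ξ', |∑ ξ, O ξ' ξ * D ξ| :=
      Finset.sum_congr rfl fun ξ' _ => by rw [hrow ξ']
    rw [hB]
    have hmul := mul_le_mul_of_nonneg_left hkey (le_of_lt (inv_pos.mpr hgap))
    rw [← mul_assoc, inv_mul_cancel₀ hgap.ne', one_mul] at hmul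
    nlinarith [hmul]
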